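/- For positive integers s, D with s ≥ 3D−1, a positive integer n, and any j ∈ {1,…,D}, the quantity r_{n,j} is strictly positive: r_{n,j} > 0. (Indeed R_n(m + j/D) = 0 for 1 ≤ m ≤ n−1 and R_n(m + j/D) > 0 for every integer m ≥ n.) -/
import Mathlib


/-- The rational function `R_n(t)` from [FSZ18]:
`R_n(t) = D^(3Dn) * n!^(s+1-3D) * (∏_{l=0}^{3Dn} (t - n + l/D)) / (∏_{l=0}^{n} (t + l)^(s+1))`. -/
noncomputable def Rfun (s D n : ℕ) (t : ℝ) : ℝ :=
  (D : ℝ) ^ (3 * D * n) * (n.factorial : ℝ) ^ (s + 1 - 3 * D) *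
      (∏ l ∈ Finset.range (3 * D * n + 1), (t - n + l / D)) /
    ∏ l ∈ Finset.range (n + 1), (t + l) ^ (s + 1)

/-- The linear forms `r_{n,j} = ∑_{m=1}^∞ R_n(m + j/D)`. -/
noncomputable def rApprox (s D n j : ℕ) : ℝ :=
  ∑' m : ℕ, Rfun s D n ((m : ℝ) + 1 + j / D)

lemma Rfun_pos (s D n : ℕ) (hD : 0 < D) {t : ℝ} (ht : (n : ℝ) < t) :
    0 < Rfun s D n t := by
  have hD' : (0 : ℝ) < D := by exact_mod_cast hD
  have hn0 : (0 : ℝ) ≤ n := Nat.cast_nonneg n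
  unfold Rfun
  apply div_pos
  · apply mul_pos
    · apply mul_pos (pow_pos hD' _)
      exact pow_pos (by exact_mod_cast n.factorial_pos) _
    · apply Finset.prod_pos
      intro l _
      have : (0 : ℝ) ≤ (l : ℝ) / D := by positivity
      linarith
  · apply Finset.prod_pos
    intro l _
    apply pow_pos
    have : (0 : ℝ) ≤ (l : ℝ) := Nat.cast_nonneg l
    linarith

lemma Rfun_eq_zero (s D n m j : ℕ) (hD : 0 < D) (hj1 : 1 ≤ j) (hjD : j ≤ D)
    (h : m + 2 ≤ n) : Rfun s D n ((m : ℝ) + 1 + j / D) = 0 := by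
  have hD' : (0 : ℝ) < D := by exact_mod_cast hD
  have hmn : m + 1 ≤ n := by omega
  have hnm1 : 1 ≤ n - (m + 1) := by omega
  have hjle : j ≤ D * (n - (m + 1)) := le_trans hjD (Nat.le_mul_of_pos_right D (by omega))
  set l0 : ℕ := D * (n - (m + 1)) - j with hl0
  have hl0mem : l0 ∈ Finset.range (3 * D * n + 1) := by
    have h1 : l0 ≤ D * (n - (m + 1)) := Nat.sub_le _ _
    have h2 : D * (n - (m + 1)) ≤ D * n := Nat.mul_le_mul_left D (by omega)
    have h3 : D * n ≤ 3 * D * n := by nlinarith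
    exact Finset.mem_range.mpr (by omega)
  have hcast : (l0 : ℝ) = (D : ℝ) * ((n : ℝ) - (m : ℝ) - 1) - j := by
    rw [hl0, Nat.cast_sub hjle, Nat.cast_mul, Nat.cast_sub hmn]
    push_cast
    ring
  have hfac : (m : ℝ) + 1 + j / D - n + (l0 : ℝ) / D = 0 := by
    rw [hcast]
    field_simp
    ring
  have hP : (∏ l ∈ Finset.range (3 * D * n + 1),
      ((m : ℝ) + 1 + j / D - n + (l : ℝ) / D)) = 0 :=
    Finset.prod_eq_zero hl0mem hfac
  unfold Rfun
  rw [hP, mul_zero, zero_div]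

lemma Rfun_le (s D n : ℕ) (hD : 0 < D) (hsD : 3 * D ≤ s + 1) {t : ℝ}
    (ht1 : 1 ≤ t) (htn : (n : ℝ) ≤ t) :
    Rfun s D n t ≤ ((D : ℝ) ^ (3 * D * n) * (n.factorial : ℝ) ^ (s + 1 - 3 * D) *
      (3 * (n : ℝ) + 1) ^ (3 * D * n + 1)) / t ^ 2 := by
  have hD' : (0 : ℝ) < D := by exact_mod_cast hD
  have ht0 : (0 : ℝ) < t := lt_of_lt_of_le one_pos ht1
  set A : ℝ := (D : ℝ) ^ (3 * D * n) * (n.factorial : ℝ) ^ (s + 1 - 3 * D) with hA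
  have hA0 : 0 < A := by
    apply mul_pos (pow_pos hD' _)
    exact pow_pos (by exact_mod_cast n.factorial_pos) _
  set N : ℕ := 3 * D * n + 1 with hN
  -- bound on numerator product
  have hfac_nonneg : ∀ l ∈ Finset.range N, 0 ≤ t - n + (l : ℝ) / D := by
    intro l _
    have : (0 : ℝ) ≤ (l : ℝ) / D := by positivity
    linarith
  have hfac_le : ∀ l ∈ Finset.range N, t - n + (l : ℝ) / D ≤ (3 * (n : ℝ) + 1) * t := by
    intro l hl
    have hlle : (l : ℝ) ≤ 3 * D * n := by
      have : l ≤ 3 * D * n := by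
        have := Finset.mem_range.mp hl; omega
      exact_mod_cast this
    have hldiv : (l : ℝ) / D ≤ 3 * n := by
      rw [div_le_iff₀ hD']
      have hD1 : (1 : ℝ) ≤ D := by exact_mod_cast hD
      nlinarith [Nat.cast_nonneg (α := ℝ) n]
    have hn0 : (0 : ℝ) ≤ n := Nat.cast_nonneg n
    nlinarith
  have hP : (∏ l ∈ Finset.range N, (t - n + (l : ℝ) / D)) ≤ ((3 * (n : ℝ) + 1) * t) ^ N := by
    calc (∏ l ∈ Finset.range N, (t - n + (l : ℝ) / D))
        ≤ ∏ _l ∈ Finset.range N, (3 * (n : ℝ) + 1) * t :=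
          Finset.prod_le_prod hfac_nonneg hfac_le
      _ = ((3 * (n : ℝ) + 1) * t) ^ N := by
          rw [Finset.prod_const, Finset.card_range]
  -- bound on denominator product
  have hQ : t ^ (N + 2) ≤ ∏ l ∈ Finset.range (n + 1), (t + l) ^ (s + 1) := by
    have h1 : (t ^ (s + 1)) ^ (n + 1) ≤ ∏ l ∈ Finset.range (n + 1), (t + l) ^ (s + 1) := by
      calc (t ^ (s + 1)) ^ (n + 1) = ∏ _l ∈ Finset.range (n + 1), t ^ (s + 1) := by
            rw [Finset.prod_const, Finset.card_range]
        _ ≤ ∏ l ∈ Finset.range (n + 1), (t + l) ^ (s + 1) := by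
            apply Finset.prod_le_prod
            · intro l _; positivity
            · intro l _
              apply pow_le_pow_left₀ (le_of_lt ht0)
              have : (0 : ℝ) ≤ (l : ℝ) := Nat.cast_nonneg l
              linarith
    have h2 : t ^ (N + 2) ≤ (t ^ (s + 1)) ^ (n + 1) := by
      rw [← pow_mul]
      apply pow_le_pow_right₀ ht1
      have h3 : 3 * D * (n + 1) ≤ (s + 1) * (n + 1) := Nat.mul_le_mul_right _ hsD
      have h4 : 3 ≤ 3 * D := by omega
      calc N + 2 = 3 * D * n + 3 := by omega
        _ ≤ 3 * D * n + 3 * D := by omega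
        _ = 3 * D * (n + 1) := by ring
        _ ≤ (s + 1) * (n + 1) := h3
    linarith
  have hQ0 : (0 : ℝ) < t ^ (N + 2) := pow_pos ht0 _
  have hnum : A * (∏ l ∈ Finset.range N, (t - n + (l : ℝ) / D))
      ≤ A * ((3 * (n : ℝ) + 1) * t) ^ N :=
    mul_le_mul_of_nonneg_left hP (le_of_lt hA0)
  have hnum0 : (0 : ℝ) ≤ A * ((3 * (n : ℝ) + 1) * t) ^ N := by positivity
  have key : Rfun s D n t ≤ A * ((3 * (n : ℝ) + 1) * t) ^ N / t ^ (N + 2) := by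
    unfold Rfun
    exact div_le_div₀ hnum0 hnum hQ0 hQ
  have heq : A * ((3 * (n : ℝ) + 1) * t) ^ N / t ^ (N + 2)
      = A * (3 * (n : ℝ) + 1) ^ N / t ^ 2 := by
    have ht0' : t ≠ 0 := ne_of_gt ht0
    rw [mul_pow, pow_add]
    field_simp
    ring
  rw [heq] at key
  exact key

/-- The quantity `r_{n,j}` is strictly positive. -/
theorem rApprox_pos (s D : ℕ) (hs : 0 < s) (hD : 0 < D) (hsD : 3 * D - 1 ≤ s)
    (n : ℕ) (hn : 0 < n) (j : ℕ) (hj : j ∈ Finset.Icc 1 D) :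
    0 < rApprox s D n j := by
  obtain ⟨hj1, hjD⟩ := Finset.mem_Icc.mp hj
  have hsD' : 3 * D ≤ s + 1 := by omega
  have hD' : (0 : ℝ) < D := by exact_mod_cast hD
  have hjd_pos : (0 : ℝ) < (j : ℝ) / D := by
    apply div_pos _ hD'
    exact_mod_cast hj1
  set f : ℕ → ℝ := fun m => Rfun s D n ((m : ℝ) + 1 + j / D) with hf
  set K : ℝ := (D : ℝ) ^ (3 * D * n) * (n.factorial : ℝ) ^ (s + 1 - 3 * D) *
      (3 * (n : ℝ) + 1) ^ (3 * D * n + 1) with hK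
  have hK0 : 0 ≤ K := by
    have : (0 : ℝ) < (n.factorial : ℝ) := by exact_mod_cast n.factorial_pos
    positivity
  have h_nonneg : ∀ m, 0 ≤ f m := by
    intro m
    rcases le_or_gt n (m + 1) with hcase | hcase
    · apply le_of_lt
      apply Rfun_pos s D n hD
      have : (n : ℝ) ≤ (m : ℝ) + 1 := by exact_mod_cast hcase
      linarith
    · have : f m = 0 := Rfun_eq_zero s D n m j hD hj1 hjD (by omega)
      rw [this]
  have h_le : ∀ m, f m ≤ K / ((m : ℝ) + 1) ^ 2 := by
    intro m
    have hm1 : (1 : ℝ) ≤ (m : ℝ) + 1 := by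
      have : (0 : ℝ) ≤ (m : ℝ) := Nat.cast_nonneg m
      linarith
    rcases le_or_gt n (m + 1) with hcase | hcase
    · have ht1 : (1 : ℝ) ≤ (m : ℝ) + 1 + j / D := by linarith
      have htn : (n : ℝ) ≤ (m : ℝ) + 1 + j / D := by
        have : (n : ℝ) ≤ (m : ℝ) + 1 := by exact_mod_cast hcase
        linarith
      calc f m ≤ K / ((m : ℝ) + 1 + j / D) ^ 2 :=
            Rfun_le s D n hD hsD' ht1 htn
        _ ≤ K / ((m : ℝ) + 1) ^ 2 := by
            apply div_le_div_of_nonneg_left hK0 (by positivity)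
            nlinarith
    · have : f m = 0 := Rfun_eq_zero s D n m j hD hj1 hjD (by omega)
      rw [this]
      positivity
  have h_sum_bound : Summable (fun m : ℕ => K / ((m : ℝ) + 1) ^ 2) := by
    have h2 : Summable (fun m : ℕ => 1 / ((m : ℝ)) ^ 2) :=
      Real.summable_one_div_nat_pow.mpr one_lt_two
    have h3 : Summable (fun m : ℕ => 1 / ((m : ℝ) + 1) ^ 2) := by
      have := (summable_nat_add_iff (f := fun m : ℕ => 1 / ((m : ℝ)) ^ 2) 1).mpr h2
      refine this.congr fun m => ?_
      push_cast
      ring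
    have := h3.mul_left K
    refine this.congr fun m => ?_
    ring
  have h_sum : Summable f := Summable.of_nonneg_of_le h_nonneg h_le h_sum_bound
  have h_pos : 0 < f (n - 1) := by
    apply Rfun_pos s D n hD
    have h1 : ((n - 1 : ℕ) : ℝ) + 1 = (n : ℝ) := by
      rw [Nat.cast_sub hn]
      push_cast; ring
    rw [h1]
    linarith
  exact Summable.tsum_pos h_sum h_nonneg (n - 1) h_pos
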